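/- Let T be a {1,3}-tree and let H be a collection of pairwise disjoint leaf-paths in T. Then the point (1/2)·𝟙_H is a vertex of the polytope P_T. -/

import Mathlib

open Finset
open scoped Classical

noncomputable section

/-- The Liu–Osserman polytope `P_T` of a `{1,3}`-graph, as a subset of `ℝ^{Sym2 V}`
supported on the edges of `T`: at each internal (degree-3) node with incident edges
`a, b, c` the triangle inequalities `w_a ≤ w_b + w_c` (in all three versions) and the
perimeter inequality `w_a + w_b + w_c ≤ 1` hold, and `0 ≤ w_e ≤ 1/2` for any edge both
of whose endpoints are leaves. -/
def memP {V : Type*} [Fintype V] [DecidableEq V] (T : SimpleGraph V) [DecidableRel T.Adj]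
    (w : Sym2 V → ℝ) : Prop :=
  (∀ e, e ∉ T.edgeSet → w e = 0) ∧
  (∀ v : V, T.degree v = 3 →
    (∀ a ∈ T.incidenceFinset v, w a ≤ ∑ b ∈ (T.incidenceFinset v).erase a, w b) ∧
    ∑ a ∈ T.incidenceFinset v, w a ≤ 1) ∧
  (∀ e ∈ T.edgeSet, (∀ v ∈ e, T.degree v = 1) → 0 ≤ w e ∧ w e ≤ 1 / 2)

/-- `H` is (the edge set of) a collection of pairwise disjoint leaf-paths of the
`{1,3}`-tree `T`: a set of edges in which every internal (degree-3) node of `T` has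
degree `0` or `2` (an internally Eulerian subgraph of a tree). -/
def isLeafPathCollection {V : Type*} [Fintype V] [DecidableEq V] (T : SimpleGraph V)
    [DecidableRel T.Adj] (H : Finset (Sym2 V)) : Prop :=
  H ⊆ T.edgeFinset ∧
  ∀ v : V, T.degree v = 3 →
    (H.filter (fun e => v ∈ e)).card = 0 ∨ (H.filter (fun e => v ∈ e)).card = 2

/-- The leaf-edges of `T`: edges incident to a degree-1 vertex. -/
def leafEdges {V : Type*} [Fintype V] [DecidableEq V] (T : SimpleGraph V)
    [DecidableRel T.Adj] : Finset (Sym2 V) :=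
  T.edgeFinset.filter (fun e => ∃ v ∈ e, T.degree v = 1)


/-- The point `(1/2)·𝟙_H` associated to a collection `H` of disjoint leaf-paths. -/
def halfIndicator {V : Type*} [Fintype V] [DecidableEq V] (H : Finset (Sym2 V)) :
    Sym2 V → ℝ :=
  fun e => if e ∈ H then 1 / 2 else 0

private lemma tight_le {a b p q c : ℝ} (ha : 0 < a) (hb : 0 < b) (hab : a + b = 1)
    (hp : p ≤ c) (hq : q ≤ c) (h : a * p + b * q = c) : p = c ∧ q = c := by
  have h1 : a * (c - p) + b * (c - q) = 0 := by linear_combination c * hab - h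
  have h2 : 0 ≤ a * (c - p) := mul_nonneg ha.le (by linarith)
  have h3 : 0 ≤ b * (c - q) := mul_nonneg hb.le (by linarith)
  have h4 : a * (c - p) = 0 := by linarith
  have h5 : b * (c - q) = 0 := by linarith
  have h6 : c - p = 0 := (mul_eq_zero.mp h4).resolve_left ha.ne'
  have h7 : c - q = 0 := (mul_eq_zero.mp h5).resolve_left hb.ne'
  constructor <;> linarith

private lemma filter_inc {V : Type*} [Fintype V] [DecidableEq V] (T : SimpleGraph V)
    [DecidableRel T.Adj] (H : Finset (Sym2 V)) (hH : H ⊆ T.edgeFinset) (v : V) :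
    (T.incidenceFinset v).filter (· ∈ H) = H.filter (fun e => v ∈ e) := by
  ext e
  simp only [Finset.mem_filter, SimpleGraph.mem_incidenceFinset]
  constructor
  · rintro ⟨⟨_, hv⟩, hh⟩; exact ⟨hh, hv⟩
  · rintro ⟨hh, hv⟩; exact ⟨⟨SimpleGraph.mem_edgeFinset.mp (hH hh), hv⟩, hh⟩

private lemma sum_halfIndicator {V : Type*} [Fintype V] [DecidableEq V]
    (H : Finset (Sym2 V)) (s : Finset (Sym2 V)) :
    ∑ i ∈ s, halfIndicator H i = ((s.filter (· ∈ H)).card : ℝ) * (1 / 2) := by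
  unfold halfIndicator
  rw [← Finset.sum_filter, Finset.sum_const, nsmul_eq_mul]

theorem stmt6' {V : Type*} [Fintype V] [DecidableEq V] (T : SimpleGraph V)
    [DecidableRel T.Adj] (hconn : T.Connected) (hacyc : T.IsAcyclic)
    (hdeg : ∀ v : V, T.degree v = 1 ∨ T.degree v = 3)
    (H : Finset (Sym2 V)) (hH : isLeafPathCollection T H) :
    halfIndicator H ∈ Set.extremePoints ℝ {w : Sym2 V → ℝ | memP T w} := by
  classical
  obtain ⟨hHsub, hHdeg⟩ := hH
  set x : Sym2 V → ℝ := halfIndicator H with hxdef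
  have hx0 : ∀ e, e ∉ H → x e = 0 := by intro e he; simp [hxdef, halfIndicator, he]
  have hxh : ∀ e, e ∈ H → x e = 1 / 2 := by intro e he; simp [hxdef, halfIndicator, he]
  -- membership
  have hxP : memP T x := by
    refine ⟨?_, ?_, ?_⟩
    · intro e he
      apply hx0
      intro heH
      exact he (SimpleGraph.mem_edgeFinset.mp (hHsub heH))
    · intro v hv3
      set I := T.incidenceFinset v with hI
      have herase : ∀ c ∈ I, ∑ i ∈ I.erase c, x i = (∑ i ∈ I, x i) - x c := by
        intro c hc
        have := Finset.add_sum_erase I x hc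
        linarith
      have hsx : ∑ i ∈ I, x i = ((I.filter (· ∈ H)).card : ℝ) * (1 / 2) :=
        sum_halfIndicator H I
      have hfc : (I.filter (· ∈ H)).card = 0 ∨ (I.filter (· ∈ H)).card = 2 := by
        rw [hI, filter_inc T H hHsub v]; exact hHdeg v hv3
      rcases hfc with hfc | hfc
      · have hemp : I.filter (· ∈ H) = ∅ := Finset.card_eq_zero.mp hfc
        have hz : ∀ c ∈ I, x c = 0 := by
          intro c hc
          apply hx0
          intro hcH
          have : c ∈ I.filter (· ∈ H) := Finset.mem_filter.mpr ⟨hc, hcH⟩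
          simp [hemp] at this
        constructor
        · intro c hc
          show x c ≤ ∑ i ∈ I.erase c, x i
          rw [herase c hc, hz c hc]
          have : ∑ i ∈ I, x i = 0 := Finset.sum_eq_zero hz
          linarith
        · show ∑ i ∈ I, x i ≤ 1
          rw [hsx, hfc]; norm_num
      · have hsx1 : ∑ i ∈ I, x i = 1 := by rw [hsx, hfc]; norm_num
        constructor
        · intro c hc
          show x c ≤ ∑ i ∈ I.erase c, x i
          rw [herase c hc, hsx1]
          by_cases hcH : c ∈ H
          · rw [hxh c hcH]; norm_num
          · rw [hx0 c hcH]; norm_num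
        · show ∑ i ∈ I, x i ≤ 1
          rw [hsx1]
    · intro e _ _
      by_cases heH : e ∈ H
      · rw [hxh e heH]; norm_num
      · rw [hx0 e heH]; norm_num
  refine ⟨hxP, ?_⟩
  rintro y hy z hz ⟨a, b, ha, hb, hab, hxyz⟩
  simp only [Set.mem_setOf_eq] at hy hz
  have hpt : ∀ e, a * y e + b * z e = x e := by
    intro e
    have := congrFun hxyz e
    simpa [smul_eq_mul] using this
  have key : ∀ e, y e = x e ∧ z e = x e := by
    intro e
    by_cases heT : e ∈ T.edgeSet
    · by_cases hleaf : ∀ v ∈ e, T.degree v = 1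
      · obtain ⟨hy0, hy2⟩ := hy.2.2 e heT hleaf
        obtain ⟨hz0, hz2⟩ := hz.2.2 e heT hleaf
        by_cases heH : e ∈ H
        · have hv := hxh e heH
          have := tight_le ha hb hab hy2 hz2 (by rw [hpt e, hv])
          rw [hv]; exact this
        · have hv := hx0 e heH
          have h := hpt e
          rw [hv]
          constructor <;> nlinarith
      · push_neg at hleaf
        obtain ⟨v, hve, hv1⟩ := hleaf
        have hv3 : T.degree v = 3 := (hdeg v).resolve_left hv1
        set I := T.incidenceFinset v with hI
        have hcard : I.card = 3 := by
          rw [hI, T.card_incidenceFinset_eq_degree]; exact hv3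
        have heI : e ∈ I := by
          rw [hI, SimpleGraph.mem_incidenceFinset]; exact ⟨heT, hve⟩
        have hsum : a * ∑ i ∈ I, y i + b * ∑ i ∈ I, z i = ∑ i ∈ I, x i := by
          rw [Finset.mul_sum, Finset.mul_sum, ← Finset.sum_add_distrib]
          exact Finset.sum_congr rfl fun i _ => hpt i
        have herase : ∀ (w : Sym2 V → ℝ), ∀ c ∈ I,
            ∑ i ∈ I.erase c, w i = (∑ i ∈ I, w i) - w c := by
          intro w c hc
          have := Finset.add_sum_erase I w hc
          linarith
        have htri : ∀ w, memP T w → ∀ c ∈ I, w c - ((∑ i ∈ I, w i) - w c) ≤ 0 := by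
          intro w hw c hc
          have h1 : w c ≤ ∑ i ∈ I.erase c, w i := (hw.2.1 v hv3).1 c hc
          rw [herase w c hc] at h1
          linarith
        have hcomb : ∀ c, a * (y c - ((∑ i ∈ I, y i) - y c))
            + b * (z c - ((∑ i ∈ I, z i) - z c)) = x c - ((∑ i ∈ I, x i) - x c) := by
          intro c
          linear_combination (2 : ℝ) * hpt c - hsum
        have hsx : ∑ i ∈ I, x i = ((I.filter (· ∈ H)).card : ℝ) * (1 / 2) :=
          sum_halfIndicator H I
        have hfc : (I.filter (· ∈ H)).card = 0 ∨ (I.filter (· ∈ H)).card = 2 := by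
          rw [hI, filter_inc T H hHsub v]; exact hHdeg v hv3
        rcases hfc with hfc | hfc
        · -- no H edges at v
          have hemp : I.filter (· ∈ H) = ∅ := Finset.card_eq_zero.mp hfc
          have hz' : ∀ c ∈ I, x c = 0 := by
            intro c hc
            apply hx0
            intro hcH
            have : c ∈ I.filter (· ∈ H) := Finset.mem_filter.mpr ⟨hc, hcH⟩
            simp [hemp] at this
          have hsx0 : ∑ i ∈ I, x i = 0 := Finset.sum_eq_zero hz'
          have htight : ∀ c ∈ I, 2 * y c = ∑ i ∈ I, y i ∧ 2 * z c = ∑ i ∈ I, z i := by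
            intro c hc
            have hxc : x c - ((∑ i ∈ I, x i) - x c) = 0 := by
              rw [hz' c hc, hsx0]; ring
            have := tight_le ha hb hab (htri y hy c hc) (htri z hz c hc)
              (by rw [hcomb c, hxc])
            constructor <;> linarith [this.1, this.2]
          have hSy : ∑ i ∈ I, y i = 0 := by
            have h0 : ∑ c ∈ I, (2 * y c) = ∑ _c ∈ I, ∑ i ∈ I, y i :=
              Finset.sum_congr rfl (fun c hc => (htight c hc).1)
            have h1 : ∑ c ∈ I, (2 * y c) = 3 * ∑ i ∈ I, y i := by
              rw [h0, Finset.sum_const, hcard, nsmul_eq_mul]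
              norm_num
            have h2 : ∑ c ∈ I, (2 * y c) = 2 * ∑ i ∈ I, y i := by
              rw [← Finset.mul_sum]
            linarith
          have hSz : ∑ i ∈ I, z i = 0 := by
            have h0 : ∑ c ∈ I, (2 * z c) = ∑ _c ∈ I, ∑ i ∈ I, z i :=
              Finset.sum_congr rfl (fun c hc => (htight c hc).2)
            have h1 : ∑ c ∈ I, (2 * z c) = 3 * ∑ i ∈ I, z i := by
              rw [h0, Finset.sum_const, hcard, nsmul_eq_mul]
              norm_num
            have h2 : ∑ c ∈ I, (2 * z c) = 2 * ∑ i ∈ I, z i := by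
              rw [← Finset.mul_sum]
            linarith
          have := htight e heI
          rw [hz' e heI]
          constructor <;> linarith [this.1, this.2, hSy, hSz]
        · -- two H edges at v
          have hsx1 : ∑ i ∈ I, x i = 1 := by rw [hsx, hfc]; norm_num
          -- perimeter tight
          have hyp : (∑ i ∈ I, y i) ≤ 1 := (hy.2.1 v hv3).2
          have hzp : (∑ i ∈ I, z i) ≤ 1 := (hz.2.1 v hv3).2
          have hper := tight_le ha hb hab hyp hzp (hsum.trans hsx1)
          have hSy : ∑ i ∈ I, y i = 1 := hper.1
          have hSz : ∑ i ∈ I, z i = 1 := hper.2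
          have hhalf : ∀ c ∈ I, c ∈ H → y c = 1 / 2 ∧ z c = 1 / 2 := by
            intro c hc hcH
            have hxc : x c - ((∑ i ∈ I, x i) - x c) = 0 := by
              rw [hxh c hcH, hsx1]; ring
            have := tight_le ha hb hab (htri y hy c hc) (htri z hz c hc)
              (by rw [hcomb c, hxc])
            constructor <;> linarith [this.1, this.2, hSy, hSz]
          by_cases heH : e ∈ H
          · rw [hxh e heH]; exact hhalf e heI heH
          · -- the filter is exactly I.erase e
            have hFsub : I.filter (· ∈ H) ⊆ I.erase e := by
              intro c hc
              rw [Finset.mem_filter] at hc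
              refine Finset.mem_erase.mpr ⟨?_, hc.1⟩
              rintro rfl; exact heH hc.2
            have hFeq : I.filter (· ∈ H) = I.erase e := by
              apply Finset.eq_of_subset_of_card_le hFsub
              rw [hfc, Finset.card_erase_of_mem heI, hcard]
            have hcE : (I.erase e).card = 2 := by
              rw [Finset.card_erase_of_mem heI, hcard]
            have hEH : ∀ c ∈ I.erase e, c ∈ I ∧ c ∈ H := by
              intro c hc
              rw [← hFeq, Finset.mem_filter] at hc
              exact hc
            have hsumFy : ∑ i ∈ I.erase e, y i = 1 := by
              have h0 : ∑ i ∈ I.erase e, y i = ∑ _i ∈ I.erase e, (1 / 2 : ℝ) :=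
                Finset.sum_congr rfl (fun c hc =>
                  (hhalf c (hEH c hc).1 (hEH c hc).2).1)
              rw [h0, Finset.sum_const, hcE, nsmul_eq_mul]
              norm_num
            have hsumFz : ∑ i ∈ I.erase e, z i = 1 := by
              have h0 : ∑ i ∈ I.erase e, z i = ∑ _i ∈ I.erase e, (1 / 2 : ℝ) :=
                Finset.sum_congr rfl (fun c hc =>
                  (hhalf c (hEH c hc).1 (hEH c hc).2).2)
              rw [h0, Finset.sum_const, hcE, nsmul_eq_mul]
              norm_num
            have hy' := herase y e heI
            have hz' := herase z e heI
            rw [hx0 e heH]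
            constructor <;> linarith
    · have hxe : x e = 0 := by
        apply hx0
        intro heH
        exact heT (SimpleGraph.mem_edgeFinset.mp (hHsub heH))
      rw [hxe, hy.1 e heT, hz.1 e heT]
      exact ⟨rfl, rfl⟩
  exact funext fun e => (key e).1
/-- Lemma 2.3: for a `{1,3}`-tree `T` and a collection `H` of disjoint leaf-paths,
the point `(1/2)·𝟙_H` is a vertex (extreme point) of the polytope `P_T`. -/
theorem stmt6 {V : Type*} [Fintype V] [DecidableEq V] (T : SimpleGraph V)
    [DecidableRel T.Adj] (hconn : T.Connected) (hacyc : T.IsAcyclic)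
    (hdeg : ∀ v : V, T.degree v = 1 ∨ T.degree v = 3)
    (H : Finset (Sym2 V)) (hH : isLeafPathCollection T H) :
    halfIndicator H ∈ Set.extremePoints ℝ {w : Sym2 V → ℝ | memP T w} := by
  exact stmt6' T hconn hacyc hdeg H hH
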